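/- Every planar graph G with girth at least 7 and maximum degree Δ ≥ 4 satisfies χ'_s(G) ≤ 3Δ, assuming that planar graphs of girth at least 5 and maximum degree Δ ≥ 4 have chromatic index Δ, and that planar graphs of girth at least 4 (triangle-free) are 3-vertex-colorable (Grötzsch's theorem). -/

import Mathlib

open SimpleGraph Finset

universe u

variable {V : Type u}

/-- Two edges are at distance at most 2 (in the line graph sense): they share an
endpoint or some endpoint of one is adjacent to an endpoint of the other. -/
def edgesConflict (G : SimpleGraph V) (e f : Sym2 V) : Prop :=
  ∃ a b, a ∈ e ∧ b ∈ f ∧ (a = b ∨ G.Adj a b)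

/-- A strong edge coloring: distinct edges at distance at most 2 get distinct colors. -/
def IsStrongEdgeColoring (G : SimpleGraph V) {n : ℕ} (c : G.edgeSet → Fin n) : Prop :=
  ∀ e f : G.edgeSet, e ≠ f → edgesConflict G e.1 f.1 → c e ≠ c f

def HasStrongEdgeColoring (G : SimpleGraph V) (n : ℕ) : Prop :=
  ∃ c : G.edgeSet → Fin n, IsStrongEdgeColoring G c

/-- The strong chromatic index. -/
noncomputable def strongChromaticIndex (G : SimpleGraph V) : ℕ :=
  sInf { n | HasStrongEdgeColoring G n }

/-- A proper edge coloring: distinct edges sharing an endpoint get distinct colors. -/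
def IsProperEdgeColoring (G : SimpleGraph V) {n : ℕ} (c : G.edgeSet → Fin n) : Prop :=
  ∀ e f : G.edgeSet, e ≠ f → (∃ a, a ∈ e.1 ∧ a ∈ f.1) → c e ≠ c f

/-- The edge chromatic number (chromatic index). -/
noncomputable def edgeChromaticNumber (G : SimpleGraph V) : ℕ :=
  sInf { n | ∃ c : G.edgeSet → Fin n, IsProperEdgeColoring G c }

/-- `G` has `H` as a minor: disjoint nonempty connected branch sets, one per vertex of `H`,
with edges of `G` between branch sets corresponding to edges of `H`. -/
def HasMinor {W : Type} (G : SimpleGraph V) (H : SimpleGraph W) : Prop :=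
  ∃ b : W → Set V, (∀ w, (b w).Nonempty) ∧ (∀ w, (G.induce (b w)).Connected) ∧
    (Pairwise fun w₁ w₂ => Disjoint (b w₁) (b w₂)) ∧
    ∀ ⦃w₁ w₂⦄, H.Adj w₁ w₂ → ∃ a ∈ b w₁, ∃ a' ∈ b w₂, G.Adj a a'

/-- Planarity, via Wagner's theorem: no `K₅` minor and no `K₃,₃` minor. -/
def IsPlanar (G : SimpleGraph V) : Prop :=
  ¬ HasMinor G (⊤ : SimpleGraph (Fin 5)) ∧ ¬ HasMinor G (completeBipartiteGraph (Fin 3) (Fin 3))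

set_option linter.unusedSectionVars false

namespace StrongAux

variable [LinearOrder V] {G : SimpleGraph V} {n : ℕ}

section
variable (G)
variable (c : G.edgeSet → Fin n) (i : Fin n)

noncomputable def rfun (v : V) : V :=
  letI := Classical.dec (∃ e : G.edgeSet, c e = i ∧ v ∈ e.1)
  if h : ∃ e : G.edgeSet, c e = i ∧ v ∈ e.1 then
    min v (Sym2.Mem.other h.choose_spec.2) else v

end

variable {c : G.edgeSet → Fin n} {i : Fin n}

lemma unique_edge (hp : IsProperEdgeColoring G c) {e f : G.edgeSet}
    (he : c e = i) (hf : c f = i) {x : V} (hxe : x ∈ e.1) (hxf : x ∈ f.1) : e = f := by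
  by_contra hne
  exact hp e f hne ⟨x, hxe, hxf⟩ (he.trans hf.symm)

lemma adj_of_mem {e : G.edgeSet} {x y : V} (hx : x ∈ e.1) (hy : y ∈ e.1) (hxy : x ≠ y) :
    G.Adj x y := by
  have h := (Sym2.mem_and_mem_iff hxy).1 ⟨hx, hy⟩
  have h2 := e.2
  rw [h] at h2
  exact h2

lemma rfun_eq (hp : IsProperEdgeColoring G c) {e : G.edgeSet} (he : c e = i) {x y : V}
    (hx : x ∈ e.1) (hy : y ∈ e.1) (hxy : x ≠ y) : rfun G c i x = min x y := by
  have hex : ∃ e' : G.edgeSet, c e' = i ∧ x ∈ e'.1 := ⟨e, he, hx⟩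
  rw [rfun, dif_pos hex]
  have h1 : hex.choose = e := unique_edge hp hex.choose_spec.1 he hex.choose_spec.2 hx
  have h2 : s(x, Sym2.Mem.other hex.choose_spec.2) = (hex.choose : G.edgeSet).1 :=
    Sym2.other_spec _
  have h3 : (e : G.edgeSet).1 = s(x, y) := (Sym2.mem_and_mem_iff hxy).1 ⟨hx, hy⟩
  have h4 : s(x, Sym2.Mem.other hex.choose_spec.2) = s(x, y) :=
    h2.trans ((congrArg Subtype.val h1).trans h3)
  rw [Sym2.congr_right.1 h4]

lemma rfun_both (hp : IsProperEdgeColoring G c) {e : G.edgeSet} (he : c e = i) {x y : V}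
    (hx : x ∈ e.1) (hy : y ∈ e.1) : rfun G c i x = rfun G c i y := by
  by_cases hxy : x = y
  · subst hxy; rfl
  · rw [rfun_eq hp he hx hy hxy, rfun_eq hp he hy hx (Ne.symm hxy), min_comm]

lemma rfun_mem (hp : IsProperEdgeColoring G c) {e : G.edgeSet} (he : c e = i) {x : V}
    (hx : x ∈ e.1) : rfun G c i x ∈ e.1 := by
  have hy := Sym2.other_mem hx
  have hxy : x ≠ Sym2.Mem.other hx := by
    intro h
    have hs := Sym2.other_spec hx
    rw [← h] at hs
    have h2 := e.2
    rw [← hs] at h2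
    exact G.irrefl h2
  rw [rfun_eq hp he hx hy hxy]
  rcases le_total x (Sym2.Mem.other hx) with h | h
  · rw [min_eq_left h]; exact hx
  · rw [min_eq_right h]; exact hy

lemma rfun_spec (hp : IsProperEdgeColoring G c) {x p : V} (h : rfun G c i x = p) :
    x = p ∨ ∃ e : G.edgeSet, c e = i ∧ x ∈ e.1 ∧ p ∈ e.1 := by
  by_cases hex : ∃ e : G.edgeSet, c e = i ∧ x ∈ e.1
  · obtain ⟨e, he, hx⟩ := hex
    exact Or.inr ⟨e, he, hx, h ▸ rfun_mem hp he hx⟩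
  · left
    rw [rfun, dif_neg hex] at h
    exact h

lemma rfun_idem (hp : IsProperEdgeColoring G c) (x : V) :
    rfun G c i (rfun G c i x) = rfun G c i x := by
  rcases rfun_spec hp (rfl : rfun G c i x = rfun G c i x) with h | ⟨e, he, hx, hpm⟩
  · rw [← h]
    exact h.symm
  · exact rfun_both hp he hpm hx

lemma rfun_eq_imp (hp : IsProperEdgeColoring G c) {x y : V}
    (h : rfun G c i x = rfun G c i y) : x = y ∨ G.Adj x y := by
  by_cases hxy : x = y
  · exact Or.inl hxy
  · right
    rcases rfun_spec hp (rfl : rfun G c i x = rfun G c i x) with hx | ⟨e, he, hxe, hpe⟩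
    · rcases rfun_spec hp h.symm with hy | ⟨f, hf, hyf, hpf⟩
      · exact absurd (hx.trans hy.symm) hxy
      · rw [← hx] at hpf
        exact adj_of_mem hpf hyf hxy
    · rcases rfun_spec hp h.symm with hy | ⟨f, hf, hyf, hpf⟩
      · rw [← hy] at hpe
        exact adj_of_mem hxe hpe hxy
      · have hef : e = f := unique_edge hp he hf hpe hpf
        rw [← hef] at hyf
        exact adj_of_mem hxe hyf hxy





section
variable (G)
variable (c : G.edgeSet → Fin n) (i : Fin n)

/-- The graph obtained from `G` by contracting the matching of color `i`. -/
def HG : SimpleGraph V :=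
  SimpleGraph.fromRel (fun p q => ∃ a b, G.Adj a b ∧ rfun G c i a = p ∧ rfun G c i b = q)

end

variable {c : G.edgeSet → Fin n} {i : Fin n}

lemma HG_adj {p q : V} (h : (HG G c i).Adj p q) :
    p ≠ q ∧ ∃ a b, G.Adj a b ∧ rfun G c i a = p ∧ rfun G c i b = q := by
  rw [HG, fromRel_adj] at h
  obtain ⟨hne, hrel⟩ := h
  rcases hrel with ⟨a, b, hab, ha, hb⟩ | ⟨a, b, hab, ha, hb⟩
  · exact ⟨hne, a, b, hab, ha, hb⟩
  · exact ⟨hne, b, a, hab.symm, hb, ha⟩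

lemma HG_adj_of {p q a b : V} (hne : p ≠ q) (hab : G.Adj a b)
    (ha : rfun G c i a = p) (hb : rfun G c i b = q) : (HG G c i).Adj p q := by
  rw [HG, fromRel_adj]
  exact ⟨hne, Or.inl ⟨a, b, hab, ha, hb⟩⟩

/-- A closed trail contains a cycle of no greater length. -/
lemma exists_cycle_of_trail {α : Type*} [DecidableEq α] {G' : SimpleGraph α} {x : α} (w : G'.Walk x x)
    (ht : w.IsTrail) (hnil : w ≠ SimpleGraph.Walk.nil) :
    ∃ (y : α) (cyc : G'.Walk y y), cyc.IsCycle ∧ cyc.length ≤ w.length := by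
  cases w with
  | nil => exact absurd rfl hnil
  | @cons _ y' _ h p =>
    have hnd := ht.edges_nodup
    rw [SimpleGraph.Walk.edges_cons, List.nodup_cons] at hnd
    have hedge : s(x, y') ∉ p.bypass.edges := fun hmem => hnd.1 (p.edges_bypass_subset hmem)
    refine ⟨x, SimpleGraph.Walk.cons h p.bypass,
      (SimpleGraph.Walk.cons_isCycle_iff _ h).2 ⟨p.bypass_isPath, hedge⟩, ?_⟩
    simp only [SimpleGraph.Walk.length_cons, add_le_add_iff_right]
    exact p.length_bypass_le

lemma exists_link (hp : IsProperEdgeColoring G c) {x y : V}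
    (hr : rfun G c i x = rfun G c i y) :
    ∃ wk : G.Walk x y, (wk.edges = [] ∨ wk.edges = [s(x, y)]) ∧ wk.length ≤ 1 := by
  rcases rfun_eq_imp hp hr with h | h
  · subst h; exact ⟨SimpleGraph.Walk.nil, Or.inl rfl, by simp⟩
  · exact ⟨h.toWalk, Or.inr (by simp [SimpleGraph.Adj.toWalk]), by simp [SimpleGraph.Adj.toWalk]⟩

lemma HG_cliqueFree (hp : IsProperEdgeColoring G c) (hg : 7 ≤ G.girth) :
    (HG G c i).CliqueFree 3 := by
  intro t ht
  rw [SimpleGraph.is3Clique_iff] at ht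
  obtain ⟨u, v, w, huv, huw, hvw, -⟩ := ht
  obtain ⟨huv', a1, b2, h1, ra1, rb2⟩ := HG_adj huv
  obtain ⟨hvw', a2, b3, h2, ra2, rb3⟩ := HG_adj hvw
  obtain ⟨hwu', a3, b1, h3, ra3, rb1⟩ := HG_adj huw.symm
  -- links within fibers
  obtain ⟨lv, hlv, hlv1⟩ := exists_link (i := i) hp (rb2.trans ra2.symm)
  obtain ⟨lw, hlw, hlw1⟩ := exists_link (i := i) hp (rb3.trans ra3.symm)
  obtain ⟨lu, hlu, hlu1⟩ := exists_link (i := i) hp (rb1.trans ra1.symm)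
  set W : G.Walk a1 a1 := SimpleGraph.Walk.cons h1 (lv.append (SimpleGraph.Walk.cons h2
    (lw.append (SimpleGraph.Walk.cons h3 lu)))) with hW
  have hWedges : W.edges = s(a1, b2) :: (lv.edges ++ s(a2, b3) :: (lw.edges ++
      s(a3, b1) :: lu.edges)) := by
    rw [hW]
    rw [SimpleGraph.Walk.edges_cons, SimpleGraph.Walk.edges_append,
      SimpleGraph.Walk.edges_cons, SimpleGraph.Walk.edges_append, SimpleGraph.Walk.edges_cons]
  classical
  set f : V → Fin 3 := fun x => if rfun G c i x = u then 0 else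
    if rfun G c i x = v then 1 else 2 with hf
  have fval : ∀ x : V, (rfun G c i x = u → f x = 0) ∧ (rfun G c i x = v → f x = 1) ∧
      (rfun G c i x = w → f x = 2) := by
    intro x
    refine ⟨fun h => ?_, fun h => ?_, fun h => ?_⟩ <;> rw [hf] <;> simp only <;> rw [h]
    · rw [if_pos rfl]
    · rw [if_neg (Ne.symm huv'), if_pos rfl]
    · rw [if_neg hwu', if_neg (fun hc => hvw' hc.symm)]
  have fa1 : f a1 = 0 := (fval a1).1 ra1
  have fb1 : f b1 = 0 := (fval b1).1 rb1
  have fa2 : f a2 = 1 := (fval a2).2.1 ra2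
  have fb2 : f b2 = 1 := (fval b2).2.1 rb2
  have fa3 : f a3 = 2 := (fval a3).2.2 ra3
  have fb3 : f b3 = 2 := (fval b3).2.2 rb3
  have hmap : ∀ (xx yy : V), Sym2.map f s(xx, yy) = s(f xx, f yy) :=
    fun xx yy => Sym2.map_pair_eq _ _ _
  have hnodup : W.edges.Nodup := by
    apply List.Nodup.of_map (Sym2.map f)
    rw [hWedges]
    rcases hlv with hv | hv <;> rcases hlw with hw | hw <;> rcases hlu with hu | hu <;>
      rw [hv, hw, hu] <;>
      simp only [List.map_cons, List.map_append, List.map_nil, List.nil_append,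
        List.cons_append, hmap, fa1, fa2, fa3, fb1, fb2, fb3] <;>
      decide
  have htrail : W.IsTrail := ⟨hnodup⟩
  have hWnil : W ≠ SimpleGraph.Walk.nil := by
    rw [hW]; exact fun hc => by simpa using congrArg SimpleGraph.Walk.length hc
  obtain ⟨y, cyc, hcyc, hlen⟩ := exists_cycle_of_trail W htrail hWnil
  have hW6 : W.length ≤ 6 := by
    rw [hW]
    simp only [SimpleGraph.Walk.length_cons, SimpleGraph.Walk.length_append]
    omega
  have hegirth : G.egirth ≤ (cyc.length : ℕ∞) := by
    rw [SimpleGraph.egirth]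
    exact iInf_le_of_le y (iInf_le_of_le cyc (iInf_le _ hcyc))
  have h6 : G.egirth ≤ (6 : ℕ∞) := hegirth.trans (by exact_mod_cast le_trans hlen hW6)
  have : G.girth ≤ 6 := by
    have := ENat.toNat_le_toNat h6 (by simp)
    simpa [SimpleGraph.girth] using this
  omega





lemma exists_adj_of_reachable {α : Type*} {G' : SimpleGraph α} {x y : α}
    (h : G'.Reachable x y) (hxy : x ≠ y) : ∃ z, G'.Adj x z := by
  obtain ⟨wk⟩ := h
  cases wk with
  | nil => exact absurd rfl hxy
  | cons h _ => exact ⟨_, h⟩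

lemma hasMinor_of_HG (hp : IsProperEdgeColoring G c) {W : Type} {K : SimpleGraph W}
    (hK : ∀ w, ∃ w', K.Adj w w') (h : HasMinor (HG G c i) K) : HasMinor G K := by
  obtain ⟨b, hne, hconn, hdisj, hadj⟩ := h
  -- every vertex adjacent in HG is a fixed point of rfun
  have hfixadj : ∀ {p z : V}, (HG G c i).Adj p z → rfun G c i p = p := by
    intro p z hpz
    obtain ⟨-, a, a', -, ha, -⟩ := HG_adj hpz
    rw [← ha, rfun_idem hp]
  -- every vertex of a branch set is a fixed point
  have hfix : ∀ w, ∀ u ∈ b w, rfun G c i u = u := by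
    intro w u hu
    obtain ⟨w', hww'⟩ := hK w
    obtain ⟨p, hpw, q, hqw', hpq⟩ := hadj hww'
    by_cases hup : u = p
    · exact hup ▸ hfixadj hpq
    · have hreach := (hconn w).preconnected ⟨u, hu⟩ ⟨p, hpw⟩
      obtain ⟨z, hz⟩ := exists_adj_of_reachable hreach (fun hc => hup (congrArg Subtype.val hc))
      have : (HG G c i).Adj u z.1 := hz
      exact hfixadj this
  refine ⟨fun w => rfun G c i ⁻¹' (b w), ?_, ?_, ?_, ?_⟩
  · intro w
    obtain ⟨u, hu⟩ := hne w
    exact ⟨u, by simp only [Set.mem_preimage, hfix w u hu]; exact hu⟩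
  · intro w
    have hmemB : ∀ u ∈ b w, u ∈ rfun G c i ⁻¹' (b w) := by
      intro u hu
      simp only [Set.mem_preimage, hfix w u hu]; exact hu
    rw [SimpleGraph.connected_iff]
    constructor
    · -- preconnected
      -- first: every x in the preimage reaches its representative
      have key : ∀ x : V, (hx : x ∈ rfun G c i ⁻¹' (b w)) →
          (G.induce (rfun G c i ⁻¹' (b w))).Reachable ⟨x, hx⟩
            ⟨rfun G c i x, hmemB _ hx⟩ := by
        intro x hx
        rcases rfun_eq_imp hp (rfun_idem hp x).symm with heq | hadj'
        · have hsub : (⟨x, hx⟩ : {y // y ∈ rfun G c i ⁻¹' (b w)}) =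
              ⟨rfun G c i x, hmemB _ hx⟩ := Subtype.ext heq
          rw [hsub]
        · exact SimpleGraph.Adj.reachable
            (by exact hadj' : (G.induce (rfun G c i ⁻¹' (b w))).Adj ⟨x, hx⟩
              ⟨rfun G c i x, hmemB _ hx⟩)
      -- lift walks from HG.induce (b w)
      have lift : ∀ (p q : {y // y ∈ b w}) (wk : ((HG G c i).induce (b w)).Walk p q),
          (G.induce (rfun G c i ⁻¹' (b w))).Reachable ⟨p.1, hmemB _ p.2⟩ ⟨q.1, hmemB _ q.2⟩ := by
        intro p q wk
        induction wk with
        | nil => exact SimpleGraph.Reachable.refl _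
        | @cons p' z' q' hadj' tail ih =>
          obtain ⟨-, a, a', haa', ha, ha'⟩ := HG_adj (hadj' : (HG G c i).Adj p'.1 z'.1)
          have hamem : a ∈ rfun G c i ⁻¹' (b w) := by
            simp only [Set.mem_preimage, ha]; exact p'.2
          have ha'mem : a' ∈ rfun G c i ⁻¹' (b w) := by
            simp only [Set.mem_preimage, ha']; exact z'.2
          have r1 : (G.induce (rfun G c i ⁻¹' (b w))).Reachable ⟨p'.1, hmemB _ p'.2⟩ ⟨a, hamem⟩ := by
            have := key a hamem
            rw [show (⟨rfun G c i a, hmemB _ hamem⟩ : {y // y ∈ rfun G c i ⁻¹' (b w)}) =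
              ⟨p'.1, hmemB _ p'.2⟩ from Subtype.ext ha] at this
            exact this.symm
          have r2 : (G.induce (rfun G c i ⁻¹' (b w))).Reachable ⟨a', ha'mem⟩ ⟨z'.1, hmemB _ z'.2⟩ := by
            have := key a' ha'mem
            rw [show (⟨rfun G c i a', hmemB _ ha'mem⟩ : {y // y ∈ rfun G c i ⁻¹' (b w)}) =
              ⟨z'.1, hmemB _ z'.2⟩ from Subtype.ext ha'] at this
            exact this
          exact ((r1.trans (SimpleGraph.Adj.reachable
            (by exact haa' : (G.induce (rfun G c i ⁻¹' (b w))).Adj ⟨a, hamem⟩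
              ⟨a', ha'mem⟩))).trans r2).trans ih
      intro x y
      have hrx : rfun G c i x.1 ∈ b w := x.2
      have hry : rfun G c i y.1 ∈ b w := y.2
      obtain ⟨wk⟩ := (hconn w).preconnected ⟨rfun G c i x.1, hrx⟩ ⟨rfun G c i y.1, hry⟩
      have hmid := lift _ _ wk
      have h1 := key x.1 x.2
      have h2 := key y.1 y.2
      exact (h1.trans hmid).trans h2.symm
    · obtain ⟨u, hu⟩ := hne w
      exact ⟨⟨u, hmemB u hu⟩⟩
  · intro w1 w2 hw
    exact (hdisj hw).preimage _
  · intro w1 w2 hw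
    obtain ⟨p, hpw, q, hqw, hpq⟩ := hadj hw
    obtain ⟨-, a, a', haa', ha, ha'⟩ := HG_adj hpq
    exact ⟨a, by simp only [Set.mem_preimage, ha]; exact hpw,
           a', by simp only [Set.mem_preimage, ha']; exact hqw, haa'⟩

lemma HG_planar (hp : IsProperEdgeColoring G c) (hpl : IsPlanar G) : IsPlanar (HG G c i) := by
  constructor
  · intro h
    refine hpl.1 (hasMinor_of_HG hp (fun w => ?_) h)
    obtain ⟨w', hw'⟩ := exists_ne w
    exact ⟨w', by simp [SimpleGraph.top_adj, hw'.symm]⟩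
  · intro h
    refine hpl.2 (hasMinor_of_HG hp (fun w => ?_) h)
    rcases w with x | x
    · exact ⟨Sum.inr 0, by simp⟩
    · exact ⟨Sum.inl 0, by simp⟩



end StrongAux

/-- Assuming that planar graphs of girth at least 5 with maximum degree `Δ ≥ 4` are class 1
(chromatic index `Δ`), and Grötzsch's theorem (planar triangle-free graphs are
3-colorable), every planar graph of girth at least 7 with maximum degree `Δ ≥ 4`
satisfies `χ'ₛ(G) ≤ 3Δ`. -/
theorem strong_index_girth_seven
    (class1 : ∀ (V : Type) [Fintype V] (G : SimpleGraph V) [DecidableRel G.Adj],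
      IsPlanar G → 5 ≤ G.girth → 4 ≤ G.maxDegree → edgeChromaticNumber G = G.maxDegree)
    (grotzsch : ∀ (V : Type) [Fintype V] (G : SimpleGraph V),
      IsPlanar G → G.CliqueFree 3 → G.Colorable 3) :
    ∀ (V : Type) [Fintype V] (G : SimpleGraph V) [DecidableRel G.Adj] (Δ : ℕ),
      IsPlanar G → 7 ≤ G.girth → G.maxDegree = Δ → 4 ≤ Δ →
      strongChromaticIndex G ≤ 3 * Δ := by
  intro V _ G _ Δ hpl hgirth hΔ h4
  classical
  letI : LinearOrder V := LinearOrder.lift' (Fintype.equivFin V) (Fintype.equivFin V).injective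
  -- obtain a proper edge coloring with Δ colors
  have hecn : edgeChromaticNumber G = Δ := by
    rw [class1 V G hpl (le_trans (by omega) hgirth) (hΔ ▸ h4), hΔ]
  have hnonempty : {n : ℕ | ∃ c : G.edgeSet → Fin n, IsProperEdgeColoring G c}.Nonempty := by
    refine ⟨Fintype.card G.edgeSet, Fintype.equivFin G.edgeSet, fun e f hef _ hc => hef ?_⟩
    exact (Fintype.equivFin G.edgeSet).injective hc
  have hmem : ∃ c : G.edgeSet → Fin (edgeChromaticNumber G), IsProperEdgeColoring G c :=
    Nat.sInf_mem hnonempty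
  rw [hecn] at hmem
  obtain ⟨c, hc⟩ := hmem
  -- 3-color the contracted graphs
  have hcol : ∀ i : Fin Δ, (StrongAux.HG G c i).Colorable 3 := fun i =>
    grotzsch V _ (StrongAux.HG_planar hc hpl) (StrongAux.HG_cliqueFree hc hgirth)
  have g : ∀ i : Fin Δ, (StrongAux.HG G c i).Coloring (Fin 3) := fun i => (hcol i).some
  -- build the strong edge coloring
  let C : G.edgeSet → Fin Δ × Fin 3 := fun e =>
    (c e, g (c e) (StrongAux.rfun G c (c e) (Quot.out e.1).1))
  have hCstrong : ∀ e f : G.edgeSet, e ≠ f → edgesConflict G e.1 f.1 → C e ≠ C f := by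
    intro e f hef hconf hCeq
    have hcc : c e = c f := congrArg Prod.fst hCeq
    obtain ⟨a, b, hae, hbf, hab⟩ := hconf
    have hab' : G.Adj a b := by
      rcases hab with rfl | h
      · exact absurd hcc (hc e f hef ⟨a, hae, hbf⟩)
      · exact h
    set i := c e with hi
    have hcf : c f = i := hcc.symm
    -- representatives
    have houte : (Quot.out e.1).1 ∈ e.1 := Sym2.out_fst_mem e.1
    have houtf : (Quot.out f.1).1 ∈ f.1 := Sym2.out_fst_mem f.1
    have hra : StrongAux.rfun G c i a = StrongAux.rfun G c i (Quot.out e.1).1 :=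
      StrongAux.rfun_both hc rfl hae houte
    have hrb : StrongAux.rfun G c i b = StrongAux.rfun G c i (Quot.out f.1).1 := by
      have := StrongAux.rfun_both (i := i) hc hcf hbf houtf
      exact this
    have hne : StrongAux.rfun G c i a ≠ StrongAux.rfun G c i b := by
      intro hreq
      have h1 : StrongAux.rfun G c i a ∈ e.1 := StrongAux.rfun_mem hc rfl hae
      have h2 : StrongAux.rfun G c i b ∈ f.1 := StrongAux.rfun_mem hc hcf hbf
      rw [hreq] at h1
      exact hef (StrongAux.unique_edge hc rfl hcf h1 h2)
    have hHadj : (StrongAux.HG G c i).Adj (StrongAux.rfun G c i a) (StrongAux.rfun G c i b) :=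
      StrongAux.HG_adj_of hne hab' rfl rfl
    have hgne := (g i).valid hHadj
    have hsnd : (C e).2 = (C f).2 := congrArg Prod.snd hCeq
    have hCe2 : (C e).2 = g i (StrongAux.rfun G c i a) := by
      simp only [C]; exact congrArg (g i) hra.symm
    have hCf2 : (C f).2 = g i (StrongAux.rfun G c i b) := by
      simp only [C]
      rw [hcf, ← hrb]
    exact hgne (by rw [← hCe2, ← hCf2, hsnd])
  -- convert to Fin (3Δ)
  have hhas : HasStrongEdgeColoring G (3 * Δ) := by
    refine ⟨fun e => Fin.cast (by ring) (finProdFinEquiv (C e)), fun e f hef hconf hceq => ?_⟩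
    refine hCstrong e f hef hconf (finProdFinEquiv.injective ?_)
    exact Fin.cast_injective _ hceq
  exact Nat.sInf_le hhas
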